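/- Let T̃(n,k) = ((2n-k)!/(n-k)!) · ∑ 1/∏_{i}(α_i + 1)! where the sum is over all compositions α of n into exactly n-k positive parts. Then T̃(n,k) = ∑_{m=0}^{n-k} (-1)^{n-k-m} C(2n-k, n+m) S(n+m, m), where S is the Stirling number of the second kind. -/

import Mathlib

open Finset

/-- The Stirling number of the second kind, `S(n,k) = (1/k!) ∑_{j=0}^k (-1)^(k-j) C(k,j) j^n`. -/
noncomputable def stirlingSnd (n k : ℕ) : ℚ :=
  (1 / (k.factorial : ℚ)) *
    ∑ j ∈ Finset.range (k + 1), (-1 : ℚ) ^ (k - j) * (k.choose j : ℚ) * (j : ℚ) ^ n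

section Aux
open PowerSeries

private lemma coeff_expSub1 (j d : ℕ) :
    (coeff (R := ℚ) d) ((exp ℚ - 1) ^ j)
      = (1 / d.factorial : ℚ) * ∑ i ∈ range (j+1), (-1:ℚ)^(j-i) * (j.choose i) * (i:ℚ)^d := by
  rw [sub_pow, map_sum, Finset.mul_sum]
  refine sum_congr rfl fun i hi => ?_
  rw [mem_range] at hi
  have h1 : ((-1:ℚ⟦X⟧) ^ (i+j) * exp ℚ ^ i * 1 ^ (j-i) * (j.choose i : ℕ))
      = (((-1:ℚ)^(i+j) * (j.choose i : ℚ)) • (exp ℚ ^ i)) := by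
    simp [smul_eq_C_mul]
    ring
  rw [h1, map_smul, exp_pow_eq_rescale_exp, coeff_rescale, coeff_exp]
  have h2 : (-1:ℚ)^(i+j) = (-1:ℚ)^(j-i) := by
    rw [show i+j = (j-i)+2*i by omega, pow_add, pow_mul]
    norm_num
  simp [h2]
  ring

private lemma coeff_phi_pow (n ℓ : ℕ) :
    (coeff (R := ℚ) (n+ℓ)) ((exp ℚ - 1 - X) ^ ℓ)
      = ∑ j ∈ range (ℓ+1), (-1:ℚ)^(ℓ-j) * (ℓ.choose j : ℚ) * (coeff (R := ℚ) (n+j)) ((exp ℚ - 1) ^ j) := by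
  rw [sub_pow, map_sum]
  refine sum_congr rfl fun j hj => ?_
  rw [mem_range] at hj
  have h1 : ((-1:ℚ⟦X⟧) ^ (j+ℓ) * (exp ℚ - 1) ^ j * X ^ (ℓ-j) * (ℓ.choose j : ℚ⟦X⟧))
      = (((-1:ℚ)^(j+ℓ) * (ℓ.choose j : ℚ)) • ((exp ℚ - 1) ^ j * X ^ (ℓ-j))) := by
    simp [smul_eq_C_mul]
    ring
  have h2 : n + ℓ = (n + j) + (ℓ - j) := by omega
  have h3 : (-1:ℚ)^(j+ℓ) = (-1:ℚ)^(ℓ-j) := by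
    rw [show j+ℓ = (ℓ-j)+2*j by omega, pow_add, pow_mul]; norm_num
  rw [h1, map_smul, h2, coeff_mul_X_pow, smul_eq_mul, h3]

private lemma coeff_phi (m : ℕ) : (coeff (R := ℚ) m) (exp ℚ - 1 - X)
    = if 2 ≤ m then (1 / m.factorial : ℚ) else 0 := by
  rw [map_sub, map_sub, coeff_exp, coeff_one, coeff_X]
  rcases m with _|_|m <;> simp

private lemma sum_comp (n ℓ : ℕ) :
    ∑ α ∈ (Fintype.piFinset fun _ : Fin ℓ => Finset.Icc 1 n).filter
        (fun α => ∑ i, α i = n), (1:ℚ) / ∏ i, ((α i + 1).factorial : ℚ)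
    = (coeff (R := ℚ) (n+ℓ)) ((exp ℚ - 1 - X) ^ ℓ) := by
  rw [coeff_pow]
  rw [← Finset.sum_subset
      (Finset.filter_subset (fun l => ∀ i ∈ range ℓ, 2 ≤ l i) (finsuppAntidiag (range ℓ) (n+ℓ)))
      (by
        intro l hl hl2
        rw [mem_filter, not_and] at hl2
        obtain ⟨i, hi, hi2⟩ := by simpa using hl2 hl
        refine Finset.prod_eq_zero (Finset.mem_range.mpr hi) ?_
        rw [coeff_phi]
        simp [hi2])]
  refine Finset.sum_nbij' (i := fun α => Finsupp.onFinset (range ℓ)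
      (fun i => if h : i < ℓ then α ⟨i, h⟩ + 1 else 0)
      (fun i hi => by rw [mem_range]; by_contra h; simp [h] at hi))
    (j := fun l => fun i : Fin ℓ => l i - 1) ?_ ?_ ?_ ?_ ?_
  · -- forward membership
    intro α hα
    rw [mem_filter, Fintype.mem_piFinset] at hα
    obtain ⟨h1, h2⟩ := hα
    rw [mem_filter, mem_finsuppAntidiag]
    have key : ∀ i : Fin ℓ, (if h : (i:ℕ) < ℓ then α ⟨(i:ℕ), h⟩ + 1 else 0) = α i + 1 :=
      fun i => by rw [dif_pos i.isLt]
    refine ⟨⟨?_, Finsupp.support_onFinset_subset⟩, ?_⟩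
    · show ∑ i ∈ range ℓ, (if h : i < ℓ then α ⟨i, h⟩ + 1 else 0) = n + ℓ
      rw [Finset.sum_range (fun i => if h : i < ℓ then α ⟨i, h⟩ + 1 else 0)]
      calc ∑ i : Fin ℓ, (if h : (i:ℕ) < ℓ then α ⟨(i:ℕ), h⟩ + 1 else 0)
          = ∑ i : Fin ℓ, (α i + 1) := Finset.sum_congr rfl (fun i _ => key i)
        _ = n + ℓ := by rw [Finset.sum_add_distrib, h2]; simp [mul_comm]
    · intro i hi
      rw [mem_range] at hi
      simp only [Finsupp.onFinset_apply, dif_pos hi]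
      have := h1 ⟨i, hi⟩
      rw [Finset.mem_Icc] at this
      omega
  · -- backward membership
    intro l hl
    rw [mem_filter, mem_finsuppAntidiag] at hl
    obtain ⟨⟨hsum, hsupp⟩, h2⟩ := hl
    have hge : ∀ i : Fin ℓ, 2 ≤ l i := fun i => h2 i (by simp [i.isLt])
    have hsum2 : ∑ i : Fin ℓ, l i = n + ℓ := by
      rw [← Finset.sum_range (fun i => l i)]; exact hsum
    have hsum' : ∑ i : Fin ℓ, (l i - 1) = n := by
      have e1 : ∑ i : Fin ℓ, ((l i - 1) + 1) = n + ℓ :=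
        (Finset.sum_congr rfl (fun i _ => by have := hge i; omega)).trans hsum2
      rw [Finset.sum_add_distrib] at e1
      simp only [Finset.sum_const, Finset.card_univ, Fintype.card_fin, smul_eq_mul,
        mul_one] at e1
      omega
    rw [mem_filter, Fintype.mem_piFinset]
    dsimp only
    refine ⟨fun i => ?_, hsum'⟩
    rw [Finset.mem_Icc]
    have h1 := hge i
    have hle : l i - 1 ≤ ∑ i : Fin ℓ, (l i - 1) :=
      Finset.single_le_sum (f := fun i : Fin ℓ => l i - 1) (fun _ _ => Nat.zero_le _)
        (Finset.mem_univ i)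
    omega
  · -- left inverse
    intro α hα
    funext i
    simp [i.isLt]
  · -- right inverse
    intro l hl
    rw [mem_filter, mem_finsuppAntidiag] at hl
    obtain ⟨⟨hsum, hsupp⟩, h2⟩ := hl
    ext a
    rw [Finsupp.onFinset_apply]
    by_cases h : a < ℓ
    · rw [dif_pos h]
      have := h2 a (mem_range.mpr h)
      dsimp only
      omega
    · rw [dif_neg h]
      by_contra hc
      have : a ∈ l.support := Finsupp.mem_support_iff.mpr (fun h0 => hc h0.symm)
      have := hsupp this
      rw [mem_range] at this
      omega
  · -- values agree
    intro α hα
    rw [mem_filter, Fintype.mem_piFinset] at hα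
    show (1:ℚ) / ∏ i, ((α i + 1).factorial : ℚ)
        = ∏ i ∈ range ℓ, (coeff (R := ℚ) ((Finsupp.onFinset (range ℓ)
            (fun i => if h : i < ℓ then α ⟨i, h⟩ + 1 else 0) _) i)) (exp ℚ - 1 - X)
    have e1 : ∏ i ∈ range ℓ, (coeff (R := ℚ) ((Finsupp.onFinset (range ℓ)
            (fun i => if h : i < ℓ then α ⟨i, h⟩ + 1 else 0)
            (fun i hi => by rw [mem_range]; by_contra h; simp [h] at hi)) i)) (exp ℚ - 1 - X)
        = ∏ i : Fin ℓ, (1 / ((α i + 1).factorial : ℚ)) := by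
      rw [Finset.prod_range]
      refine Finset.prod_congr rfl (fun i _ => ?_)
      rw [Finsupp.onFinset_apply, dif_pos i.isLt]
      simp only [Fin.eta]
      have hi1 := hα.1 i
      rw [Finset.mem_Icc] at hi1
      rw [coeff_phi, if_pos (by omega)]
    rw [e1, one_div, ← Finset.prod_inv_distrib]
    simp [one_div]

end Aux

/-- with `T̃(n,k) = ((2n-k)!/(n-k)!) ∑_α 1/∏_i (α_i+1)!`, the sum being over
compositions `α` of `n` into exactly `n-k` positive parts, one has
`T̃(n,k) = ∑_{m=0}^{n-k} (-1)^(n-k-m) C(2n-k, n+m) S(n+m, m)`. -/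
theorem tildeT_eq_ward (n k : ℕ) (hn : 1 ≤ n) (hk : k ≤ n - 1) :
    ((2 * n - k).factorial : ℚ) / ((n - k).factorial : ℚ) *
      ∑ α ∈ (Fintype.piFinset fun _ : Fin (n - k) => Finset.Icc 1 n).filter
          (fun α => ∑ i, α i = n),
        1 / ∏ i, ((α i + 1).factorial : ℚ)
    = ∑ m ∈ Finset.range (n - k + 1),
        (-1 : ℚ) ^ (n - k - m) * ((2 * n - k).choose (n + m) : ℚ) * stirlingSnd (n + m) m := by
  have hkn : k ≤ n := le_trans hk (Nat.sub_le n 1)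
  set ℓ := n - k with hℓ
  have h2 : 2 * n - k = n + ℓ := by omega
  rw [h2, sum_comp n ℓ, coeff_phi_pow, Finset.mul_sum]
  refine Finset.sum_congr rfl fun j hj => ?_
  rw [Finset.mem_range] at hj
  have hjl : j ≤ ℓ := by omega
  rw [coeff_expSub1]
  unfold stirlingSnd
  have f1 : (ℓ.choose j) * (j.factorial * (ℓ - j).factorial) = ℓ.factorial := by
    rw [← mul_assoc]; exact Nat.choose_mul_factorial_mul_factorial hjl
  have f2 : ((n+ℓ).choose (n+j)) * ((n+j).factorial * (ℓ - j).factorial) = (n+ℓ).factorial := by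
    have := Nat.choose_mul_factorial_mul_factorial (Nat.add_le_add_left hjl n)
    rw [show n + ℓ - (n + j) = ℓ - j by omega] at this
    rw [← mul_assoc]; exact this
  have f1c : ((ℓ.choose j : ℚ)) * (j.factorial * (ℓ - j).factorial) = ℓ.factorial := by
    exact_mod_cast congrArg (Nat.cast : ℕ → ℚ) f1
  have f2c : (((n+ℓ).choose (n+j) : ℚ)) * ((n+j).factorial * (ℓ - j).factorial)
      = (n+ℓ).factorial := by
    exact_mod_cast congrArg (Nat.cast : ℕ → ℚ) f2
  have hlf : (ℓ.factorial : ℚ) ≠ 0 := Nat.cast_ne_zero.mpr (Nat.factorial_ne_zero ℓ)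
  have hjf : (j.factorial : ℚ) ≠ 0 := Nat.cast_ne_zero.mpr (Nat.factorial_ne_zero j)
  have hnjf : ((n+j).factorial : ℚ) ≠ 0 := Nat.cast_ne_zero.mpr (Nat.factorial_ne_zero _)
  have hljf : ((ℓ-j).factorial : ℚ) ≠ 0 := Nat.cast_ne_zero.mpr (Nat.factorial_ne_zero _)
  have key : ((n+ℓ).factorial : ℚ) / ℓ.factorial * (ℓ.choose j) * (1/(n+j).factorial)
      = ((n+ℓ).choose (n+j) : ℚ) * (1 / j.factorial) := by
    field_simp
    refine mul_right_cancel₀ hljf ?_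
    linear_combination (((n+ℓ).factorial : ℚ)) * f1c - ((ℓ.factorial : ℚ)) * f2c
  set S : ℚ := ∑ i ∈ Finset.range (j+1), (-1:ℚ)^(j-i) * (j.choose i) * (i:ℚ)^(n+j) with hS
  calc ((n+ℓ).factorial : ℚ) / ℓ.factorial *
        ((-1:ℚ)^(ℓ-j) * (ℓ.choose j) * ((1/(n+j).factorial) * S))
      = ((n+ℓ).factorial : ℚ) / ℓ.factorial * (ℓ.choose j) * (1/(n+j).factorial)
          * ((-1:ℚ)^(ℓ-j) * S) := by ring
    _ = ((n+ℓ).choose (n+j) : ℚ) * (1 / j.factorial) * ((-1:ℚ)^(ℓ-j) * S) := by rw [key]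
    _ = (-1:ℚ)^(ℓ-j) * ((n+ℓ).choose (n+j) : ℚ) * ((1 / j.factorial) * S) := by ring
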